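/- Let α ∈ ℂ and consider the linear operators on C^∞(ℝ², ℂ) given by D₁f = f_x, D₂f = 2x f_x − f_y, and D₃f = x² f_x − x f_y + α e^{−2y} f. If there exists a nonzero finite-dimensional subspace V of C^∞(ℝ², ℂ) with D_i(V) ⊆ V for i = 1, 2, 3, then α = 0. -/

import Mathlib

/-- partial derivative in `x` of a function `f(x,y)` on `ℝ²`. -/
noncomputable def pdx (f : ℝ × ℝ → ℂ) : ℝ × ℝ → ℂ := fun p => fderiv ℝ f p (1, 0)

/-- partial derivative in `y` of a function `f(x,y)` on `ℝ²`. -/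
noncomputable def pdy (f : ℝ × ℝ → ℂ) : ℝ × ℝ → ℂ := fun p => fderiv ℝ f p (0, 1)

noncomputable def LX : (ℝ × ℝ) →L[ℝ] ℂ := Complex.ofRealCLM.comp (ContinuousLinearMap.fst ℝ ℝ ℝ)
noncomputable def LY : (ℝ × ℝ) →L[ℝ] ℂ := Complex.ofRealCLM.comp (ContinuousLinearMap.snd ℝ ℝ ℝ)
@[simp] lemma LX_apply (v : ℝ × ℝ) : LX v = (v.1 : ℂ) := rfl
@[simp] lemma LY_apply (v : ℝ × ℝ) : LY v = (v.2 : ℂ) := rfl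
lemma hasFDerivAt_X (p : ℝ × ℝ) : HasFDerivAt (fun q : ℝ × ℝ => (q.1 : ℂ)) LX p := LX.hasFDerivAt
lemma hasFDerivAt_Y (p : ℝ × ℝ) : HasFDerivAt (fun q : ℝ × ℝ => (q.2 : ℂ)) LY p := LY.hasFDerivAt
lemma diffble {f : ℝ × ℝ → ℂ} (hf : ContDiff ℝ (⊤:ℕ∞) f) : Differentiable ℝ f :=
  hf.differentiable (by norm_num)
lemma smooth_pdx {f : ℝ × ℝ → ℂ} (hf : ContDiff ℝ (⊤:ℕ∞) f) : ContDiff ℝ (⊤:ℕ∞) (pdx f) := by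
  have h := hf.fderiv_right (m := ((⊤:ℕ∞) : WithTop ℕ∞)) (by norm_num)
  exact (ContinuousLinearMap.apply ℝ ℂ ((1:ℝ),(0:ℝ))).contDiff.comp h
lemma smooth_pdy {f : ℝ × ℝ → ℂ} (hf : ContDiff ℝ (⊤:ℕ∞) f) : ContDiff ℝ (⊤:ℕ∞) (pdy f) := by
  have h := hf.fderiv_right (m := ((⊤:ℕ∞) : WithTop ℕ∞)) (by norm_num)
  exact (ContinuousLinearMap.apply ℝ ℂ ((0:ℝ),(1:ℝ))).contDiff.comp h

noncomputable def D2 (f : ℝ × ℝ → ℂ) : ℝ × ℝ → ℂ :=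
  fun p => 2 * (p.1 : ℂ) * pdx f p - pdy f p
noncomputable def D3 (α : ℂ) (f : ℝ × ℝ → ℂ) : ℝ × ℝ → ℂ :=
  fun p => (p.1 : ℂ) ^ 2 * pdx f p - (p.1 : ℂ) * pdy f p
      + α * Complex.exp (-2 * (p.2 : ℂ)) * f p

variable {f : ℝ × ℝ → ℂ} {α : ℂ}

lemma pdx_D2 (hf : ContDiff ℝ (⊤:ℕ∞) f) (p : ℝ × ℝ) :
    pdx (D2 f) p = 2 * pdx f p + 2 * (p.1:ℂ) * pdx (pdx f) p - pdx (pdy f) p := by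
  have h1 : HasFDerivAt (pdx f) (fderiv ℝ (pdx f) p) p :=
    (diffble (smooth_pdx hf) p).hasFDerivAt
  have h2 : HasFDerivAt (pdy f) (fderiv ℝ (pdy f) p) p :=
    (diffble (smooth_pdy hf) p).hasFDerivAt
  have h : HasFDerivAt (D2 f)
      ((((2 * (p.1:ℂ)) • fderiv ℝ (pdx f) p + pdx f p • ((2:ℂ) • LX))) - fderiv ℝ (pdy f) p) p :=
    (((hasFDerivAt_X p).const_mul 2).mul h1).sub h2
  show fderiv ℝ (D2 f) p (1,0) = _
  rw [h.fderiv]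
  simp [pdx, pdy]
  ring

lemma pdy_D2 (hf : ContDiff ℝ (⊤:ℕ∞) f) (p : ℝ × ℝ) :
    pdy (D2 f) p = 2 * (p.1:ℂ) * pdy (pdx f) p - pdy (pdy f) p := by
  have h1 : HasFDerivAt (pdx f) (fderiv ℝ (pdx f) p) p :=
    (diffble (smooth_pdx hf) p).hasFDerivAt
  have h2 : HasFDerivAt (pdy f) (fderiv ℝ (pdy f) p) p :=
    (diffble (smooth_pdy hf) p).hasFDerivAt
  have h : HasFDerivAt (D2 f)
      ((((2 * (p.1:ℂ)) • fderiv ℝ (pdx f) p + pdx f p • ((2:ℂ) • LX))) - fderiv ℝ (pdy f) p) p :=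
    (((hasFDerivAt_X p).const_mul 2).mul h1).sub h2
  show fderiv ℝ (D2 f) p (0,1) = _
  rw [h.fderiv]
  simp [pdx, pdy]

lemma D3_eq (α : ℂ) (f : ℝ × ℝ → ℂ) : D3 α f = fun p =>
    ((p.1 : ℂ) * (p.1 : ℂ)) * pdx f p - (p.1 : ℂ) * pdy f p
      + α * Complex.exp (-2 * (p.2 : ℂ)) * f p := by
  funext p; simp only [D3]; ring

lemma hasFDerivAt_E (p : ℝ × ℝ) :
    HasFDerivAt (fun q : ℝ × ℝ => Complex.exp (-2 * (q.2 : ℂ)))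
      (Complex.exp (-2 * (p.2:ℂ)) • ((-2:ℂ) • LY)) p :=
  ((hasFDerivAt_Y p).const_mul (-2)).cexp

lemma hasFDerivAt_D3 (hf : ContDiff ℝ (⊤:ℕ∞) f) (p : ℝ × ℝ) :
    HasFDerivAt (D3 α f)
      (((((p.1:ℂ) * (p.1:ℂ)) • fderiv ℝ (pdx f) p + pdx f p • ((p.1:ℂ) • LX + (p.1:ℂ) • LX))
        - ((p.1:ℂ) • fderiv ℝ (pdy f) p + pdy f p • LX))
        + ((α * Complex.exp (-2 * (p.2:ℂ))) • fderiv ℝ f p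
            + f p • (α • (Complex.exp (-2 * (p.2:ℂ)) • ((-2:ℂ) • LY))))) p := by
  rw [D3_eq]
  have h1 : HasFDerivAt (pdx f) (fderiv ℝ (pdx f) p) p :=
    (diffble (smooth_pdx hf) p).hasFDerivAt
  have h2 : HasFDerivAt (pdy f) (fderiv ℝ (pdy f) p) p :=
    (diffble (smooth_pdy hf) p).hasFDerivAt
  have h0 : HasFDerivAt f (fderiv ℝ f p) p := (diffble hf p).hasFDerivAt
  exact ((((hasFDerivAt_X p).mul (hasFDerivAt_X p)).mul h1).sub
      ((hasFDerivAt_X p).mul h2)).add (((hasFDerivAt_E p).const_mul α).mul h0)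

lemma pdx_D3 (hf : ContDiff ℝ (⊤:ℕ∞) f) (p : ℝ × ℝ) :
    pdx (D3 α f) p = 2 * (p.1:ℂ) * pdx f p + (p.1:ℂ)^2 * pdx (pdx f) p
      - pdy f p - (p.1:ℂ) * pdx (pdy f) p
      + α * Complex.exp (-2 * (p.2:ℂ)) * pdx f p := by
  show fderiv ℝ (D3 α f) p (1,0) = _
  rw [(hasFDerivAt_D3 hf p).fderiv]
  simp [pdx, pdy]
  ring

lemma pdy_D3 (hf : ContDiff ℝ (⊤:ℕ∞) f) (p : ℝ × ℝ) :
    pdy (D3 α f) p = (p.1:ℂ)^2 * pdy (pdx f) p - (p.1:ℂ) * pdy (pdy f) p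
      + (-2) * (α * Complex.exp (-2 * (p.2:ℂ)) * f p)
      + α * Complex.exp (-2 * (p.2:ℂ)) * pdy f p := by
  show fderiv ℝ (D3 α f) p (0,1) = _
  rw [(hasFDerivAt_D3 hf p).fderiv]
  simp [pdx, pdy]
  ring

lemma pdx_pdy {f : ℝ × ℝ → ℂ} (hf : ContDiff ℝ (⊤:ℕ∞) f) (p : ℝ × ℝ) :
    pdx (pdy f) p = pdy (pdx f) p := by
  have hd : ∀ y, HasFDerivAt f (fderiv ℝ f y) y := fun y => (diffble hf y).hasFDerivAt
  have h2 : DifferentiableAt ℝ (fderiv ℝ f) p :=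
    ((hf.fderiv_right (m := ((⊤:ℕ∞) : WithTop ℕ∞)) (by norm_num)).differentiable
      (by norm_num)) p
  have hsym := second_derivative_symmetric hd h2.hasFDerivAt ((1:ℝ),(0:ℝ)) ((0:ℝ),(1:ℝ))
  have e1 : HasFDerivAt (pdy f) ((fderiv ℝ (fderiv ℝ f) p).flip ((0:ℝ),(1:ℝ))) p := by
    show HasFDerivAt (fun y => fderiv ℝ f y ((0:ℝ),(1:ℝ))) _ p
    simpa using h2.hasFDerivAt.clm_apply (hasFDerivAt_const ((0:ℝ),(1:ℝ)) p)
  have e2 : HasFDerivAt (pdx f) ((fderiv ℝ (fderiv ℝ f) p).flip ((1:ℝ),(0:ℝ))) p := by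
    show HasFDerivAt (fun y => fderiv ℝ f y ((1:ℝ),(0:ℝ))) _ p
    simpa using h2.hasFDerivAt.clm_apply (hasFDerivAt_const ((1:ℝ),(0:ℝ)) p)
  show fderiv ℝ (pdy f) p (1,0) = fderiv ℝ (pdx f) p (0,1)
  rw [e1.fderiv, e2.fderiv]
  simpa using hsym

lemma comm12 (hf : ContDiff ℝ (⊤:ℕ∞) f) (p : ℝ × ℝ) :
    pdx (D2 f) p = 2 * pdx f p + D2 (pdx f) p := by
  rw [pdx_D2 hf p, pdx_pdy hf p]
  simp only [D2]
  ring

lemma comm23 (hf : ContDiff ℝ (⊤:ℕ∞) f) (p : ℝ × ℝ) :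
    D2 (D3 α f) p = D3 α (D2 f) p + 2 * D3 α f p := by
  have h := pdx_pdy hf p
  show 2 * (p.1:ℂ) * pdx (D3 α f) p - pdy (D3 α f) p = _
  rw [pdx_D3 hf p, pdy_D3 hf p]
  show _ = ((p.1 : ℂ) ^ 2 * pdx (D2 f) p - (p.1 : ℂ) * pdy (D2 f) p
      + α * Complex.exp (-2 * (p.2 : ℂ)) * D2 f p) + 2 * D3 α f p
  rw [pdx_D2 hf p, pdy_D2 hf p]
  simp only [D2, D3, h]
  ring

lemma contDiffX : ContDiff ℝ (⊤:ℕ∞) (fun q : ℝ × ℝ => (q.1 : ℂ)) := LX.contDiff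
lemma contDiffY : ContDiff ℝ (⊤:ℕ∞) (fun q : ℝ × ℝ => (q.2 : ℂ)) := LY.contDiff

lemma smooth_D2 (hf : ContDiff ℝ (⊤:ℕ∞) f) : ContDiff ℝ (⊤:ℕ∞) (D2 f) :=
  ((contDiff_const.mul contDiffX).mul (smooth_pdx hf)).sub (smooth_pdy hf)

lemma smooth_E : ContDiff ℝ (⊤:ℕ∞) (fun q : ℝ × ℝ => Complex.exp (-2 * (q.2 : ℂ))) :=
  Complex.contDiff_exp.comp (contDiff_const.mul contDiffY)

lemma smooth_D3 (hf : ContDiff ℝ (⊤:ℕ∞) f) : ContDiff ℝ (⊤:ℕ∞) (D3 α f) :=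
  (((contDiffX.pow 2).mul (smooth_pdx hf)).sub (contDiffX.mul (smooth_pdy hf))).add
    (((contDiff_const.mul smooth_E).mul hf))

-- linearity
lemma pdx_add (hf : Differentiable ℝ f) (hg : Differentiable ℝ g) :
    pdx (f + g) = pdx f + pdx g := by
  funext p
  show fderiv ℝ (fun q => f q + g q) p (1,0) = _
  rw [fderiv_fun_add (hf p) (hg p)]
  rfl

lemma pdy_add (hf : Differentiable ℝ f) (hg : Differentiable ℝ g) :
    pdy (f + g) = pdy f + pdy g := by
  funext p
  show fderiv ℝ (fun q => f q + g q) p (0,1) = _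
  rw [fderiv_fun_add (hf p) (hg p)]
  rfl

lemma pdx_smul (hf : Differentiable ℝ f) (c : ℂ) : pdx (c • f) = c • pdx f := by
  funext p
  show fderiv ℝ (fun q => c • f q) p (1,0) = _
  rw [fderiv_fun_const_smul (hf p) c]
  rfl

lemma pdy_smul (hf : Differentiable ℝ f) (c : ℂ) : pdy (c • f) = c • pdy f := by
  funext p
  show fderiv ℝ (fun q => c • f q) p (0,1) = _
  rw [fderiv_fun_const_smul (hf p) c]
  rfl

lemma pdx_zero : pdx (0 : ℝ × ℝ → ℂ) = 0 := by
  funext p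
  show fderiv ℝ (fun _ => (0:ℂ)) p (1,0) = 0
  rw [fderiv_fun_const]
  rfl

lemma pdy_zero : pdy (0 : ℝ × ℝ → ℂ) = 0 := by
  funext p
  show fderiv ℝ (fun _ => (0:ℂ)) p (0,1) = 0
  rw [fderiv_fun_const]
  rfl

lemma D2_add (hf : Differentiable ℝ f) (hg : Differentiable ℝ g) :
    D2 (f + g) = D2 f + D2 g := by
  funext p
  simp only [D2, pdx_add hf hg, pdy_add hf hg, Pi.add_apply]
  ring

lemma D2_smul (hf : Differentiable ℝ f) (c : ℂ) : D2 (c • f) = c • D2 f := by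
  funext p
  simp only [D2, pdx_smul hf c, pdy_smul hf c, Pi.smul_apply, smul_eq_mul]
  ring

lemma D3_smul (hf : Differentiable ℝ f) (c : ℂ) : D3 α (c • f) = c • D3 α f := by
  funext p
  simp only [D3, pdx_smul hf c, pdy_smul hf c, Pi.smul_apply, smul_eq_mul]
  ring

lemma D2_zero : D2 (0 : ℝ × ℝ → ℂ) = 0 := by
  funext p
  simp only [D2, pdx_zero, pdy_zero, Pi.zero_apply, mul_zero, sub_zero]


/-- If the operators `f ↦ f_x`, `f ↦ 2x f_x - f_y`, `f ↦ x² f_x - x f_y + α e^{-2y} f`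
admit a nonzero finite-dimensional invariant subspace of smooth functions, then `α = 0`. -/
theorem alpha_eq_zero_of_invariant_subspace
    (α : ℂ) (V : Submodule ℂ (ℝ × ℝ → ℂ))
    (hsmooth : ∀ f ∈ V, ContDiff ℝ (⊤ : ℕ∞) f)
    (hne : V ≠ ⊥) (hfin : FiniteDimensional ℂ V)
    (hD₁ : ∀ f ∈ V, pdx f ∈ V)
    (hD₂ : ∀ f ∈ V, (fun p => 2 * (p.1 : ℂ) * pdx f p - pdy f p) ∈ V)
    (hD₃ : ∀ f ∈ V, (fun p => (p.1 : ℂ) ^ 2 * pdx f p - (p.1 : ℂ) * pdy f p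
      + α * Complex.exp (-2 * (p.2 : ℂ)) * f p) ∈ V) :
    α = 0 := by
  classical
  by_contra hα
  haveI : Nontrivial ↥V := Submodule.nontrivial_iff_ne_bot.mpr hne
  have hdiff : ∀ f ∈ V, Differentiable ℝ f := fun f hf => diffble (hsmooth f hf)
  have hD2mem : ∀ f ∈ V, D2 f ∈ V := hD₂
  have hD3mem : ∀ f ∈ V, D3 α f ∈ V := hD₃
  -- the endomorphism of V induced by D2
  let T : Module.End ℂ ↥V :=
    { toFun := fun f => ⟨D2 ↑f, hD2mem _ f.2⟩
      map_add' := by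
        intro f g
        apply Subtype.ext
        show D2 ↑(f + g) = D2 ↑f + D2 ↑g
        rw [Submodule.coe_add, D2_add (hdiff _ f.2) (hdiff _ g.2)]
      map_smul' := by
        intro c f
        apply Subtype.ext
        show D2 ↑(c • f) = c • D2 ↑f
        rw [Submodule.coe_smul, D2_smul (hdiff _ f.2) c] }
  have hT : ∀ x : ↥V, (↑(T x) : ℝ × ℝ → ℂ) = D2 ↑x := fun x => rfl
  -- no infinite family of eigenvectors with distinct eigenvalues
  have FIN : ∀ (c : ℕ → ℂ), Function.Injective c → ∀ u : ℕ → ↥V,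
      (∀ n, D2 (↑(u n) : ℝ × ℝ → ℂ) = c n • (↑(u n) : ℝ × ℝ → ℂ)) → ∃ n, u n = 0 := by
    intro c hc u hu
    by_contra hno
    push_neg at hno
    have heig : ∀ n, T.HasEigenvector (c n) (u n) := by
      intro n
      refine ⟨Module.End.mem_eigenspace_iff.mpr ?_, hno n⟩
      apply Subtype.ext
      rw [hT]
      rw [hu n]
      rfl
    have hli : LinearIndependent ℂ u :=
      Module.End.eigenvectors_linearIndependent' T c hc u heig
    haveI : Finite ℕ := hli.finite
    exact not_finite ℕ
  -- Part 1: find a nonzero element of V annihilated by pdx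
  obtain ⟨ν, hν⟩ := Module.End.exists_eigenvalue T
  obtain ⟨v, hv⟩ := hν.exists_hasEigenvector
  have hvD2 : D2 (↑v : ℝ × ℝ → ℂ) = ν • (↑v : ℝ × ℝ → ℂ) := by
    have h0 := Module.End.mem_eigenspace_iff.mp hv.1
    have := congrArg (Subtype.val) h0
    rw [hT] at this
    exact this
  let w : ℕ → ↥V := fun n => Nat.rec v (fun _ g => ⟨pdx ↑g, hD₁ _ g.2⟩) n
  have hw0 : w 0 = v := rfl
  have hwsucc : ∀ n, (w (n+1)).val = pdx ((w n).val) := fun n => rfl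
  have hkey : ∀ n, D2 (w n).val = (ν - 2*(n:ℂ)) • (w n).val := by
    intro n
    induction n with
    | zero => simpa [hw0] using hvD2
    | succ n ih =>
      have hsm : ContDiff ℝ (⊤:ℕ∞) (w n).val := hsmooth _ (w n).2
      funext p
      rw [hwsucc n]
      have h1 := comm12 hsm p
      have h2 : pdx (D2 (w n).val) = (ν - 2*(n:ℂ)) • pdx (w n).val := by
        rw [ih, pdx_smul (diffble hsm)]
      rw [h2] at h1
      simp only [Pi.smul_apply, smul_eq_mul] at h1 ⊢
      push_cast
      linear_combination -h1
  have hinj1 : Function.Injective (fun n : ℕ => ν - 2*(n:ℂ)) := by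
    intro a b hab
    simp only at hab
    have : (a:ℂ) = (b:ℂ) := by linear_combination (-1/2 : ℂ) * hab
    exact_mod_cast this
  have hex : ∃ n, w n = 0 := FIN _ hinj1 w hkey
  obtain ⟨N, hN1, hN2⟩ : ∃ N, w N = 0 ∧ ∀ m < N, w m ≠ 0 := by
    obtain ⟨n, hn⟩ := hex
    induction n using Nat.strong_induction_on with
    | _ n ih =>
      by_cases h : ∃ m < n, w m = 0
      · obtain ⟨m, hm, hm0⟩ := h
        exact ih m hm hm0
      · push_neg at h
        exact ⟨n, hn, h⟩
  have hNpos : N ≠ 0 := by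
    intro h0
    apply hv.2
    have := hN1
    rw [h0, hw0] at this
    exact this
  -- the nonzero element g of V with pdx g = 0
  obtain ⟨M, hM⟩ : ∃ M, N = M + 1 := ⟨N - 1, (Nat.succ_pred_eq_of_pos (Nat.pos_of_ne_zero hNpos)).symm⟩
  have hgne : w M ≠ 0 := hN2 M (by omega)
  have hgx : pdx ((w M).val) = 0 := by
    rw [← hwsucc M, ← hM, hN1]
    rfl
  -- Part 1b: the subspace of x-independent elements of V
  let W : Submodule ℂ (ℝ × ℝ → ℂ) :=
    { carrier := {f | f ∈ V ∧ pdx f = 0}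
      add_mem' := by
        rintro a b ⟨haV, hax⟩ ⟨hbV, hbx⟩
        refine ⟨V.add_mem haV hbV, ?_⟩
        rw [pdx_add (hdiff _ haV) (hdiff _ hbV), hax, hbx, add_zero]
      zero_mem' := ⟨V.zero_mem, pdx_zero⟩
      smul_mem' := by
        rintro c a ⟨haV, hax⟩
        refine ⟨V.smul_mem c haV, ?_⟩
        rw [pdx_smul (hdiff _ haV) c, hax, smul_zero] }
  have hWV : W ≤ V := fun f hf => hf.1
  haveI hWfin : FiniteDimensional ℂ ↥W := Submodule.finiteDimensional_of_le hWV
  have hgW : (w M).val ∈ W := ⟨(w M).2, hgx⟩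
  haveI : Nontrivial ↥W := by
    refine nontrivial_of_ne ⟨(w M).val, hgW⟩ 0 ?_
    intro hcon
    apply hgne
    apply Subtype.ext
    have := congrArg Subtype.val hcon
    exact this
  have hD2W : ∀ f ∈ W, D2 f ∈ W := by
    rintro f ⟨hfV, hfx⟩
    refine ⟨hD2mem f hfV, ?_⟩
    funext p
    rw [comm12 (hsmooth f hfV) p, hfx, D2_zero]
    simp
  let S : Module.End ℂ ↥W :=
    { toFun := fun f => ⟨D2 ↑f, hD2W _ f.2⟩
      map_add' := by
        intro f g
        apply Subtype.ext
        show D2 ↑(f + g) = D2 ↑f + D2 ↑g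
        rw [Submodule.coe_add, D2_add (hdiff _ f.2.1) (hdiff _ g.2.1)]
      map_smul' := by
        intro c f
        apply Subtype.ext
        show D2 ↑(c • f) = c • D2 ↑f
        rw [Submodule.coe_smul, D2_smul (hdiff _ f.2.1) c] }
  obtain ⟨τ, hτ⟩ := Module.End.exists_eigenvalue S
  obtain ⟨q, hq⟩ := hτ.exists_hasEigenvector
  have hqD2 : D2 (q.val) = τ • (q.val) := by
    have h0 := Module.End.mem_eigenspace_iff.mp hq.1
    exact congrArg Subtype.val h0
  have hqV : q.val ∈ V := q.2.1
  have hqx : pdx q.val = 0 := q.2.2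
  have hqsm : ContDiff ℝ (⊤:ℕ∞) q.val := hsmooth _ hqV
  set μ : ℂ := -τ with hμdef
  have hqy : ∀ p, pdy q.val p = μ * q.val p := by
    intro p
    have := congrFun hqD2 p
    simp only [D2, Pi.smul_apply, smul_eq_mul] at this
    rw [hqx] at this
    simp only [Pi.zero_apply, mul_zero, zero_sub] at this
    rw [hμdef]
    linear_combination -this
  -- explicit exponential form of q
  have hu : ∀ p : ℝ × ℝ, HasFDerivAt (fun r : ℝ × ℝ => Complex.exp (-μ * (r.2:ℂ)) * q.val r)
      (Complex.exp (-μ * (p.2:ℂ)) • fderiv ℝ q.val p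
        + q.val p • (Complex.exp (-μ * (p.2:ℂ)) • ((-μ) • LY))) p := by
    intro p
    exact (((hasFDerivAt_Y p).const_mul (-μ)).cexp).mul ((diffble hqsm p).hasFDerivAt)
  have hfder0 : ∀ p, fderiv ℝ (fun r : ℝ × ℝ => Complex.exp (-μ * (r.2:ℂ)) * q.val r) p = 0 := by
    intro p
    rw [(hu p).fderiv]
    apply ContinuousLinearMap.ext
    intro z
    have hz : z = z.1 • ((1:ℝ),(0:ℝ)) + z.2 • ((0:ℝ),(1:ℝ)) := by
      simp [Prod.ext_iff]
    have hder : fderiv ℝ q.val p z = z.1 • pdx q.val p + z.2 • pdy q.val p := by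
      conv_lhs => rw [hz]
      rw [map_add, map_smul, map_smul]
      rfl
    simp only [ContinuousLinearMap.add_apply, ContinuousLinearMap.smul_apply, LY_apply,
      ContinuousLinearMap.zero_apply, smul_eq_mul]
    rw [hder, congrFun hqx p, hqy p]
    simp only [Pi.zero_apply, smul_zero, zero_add, Complex.real_smul]
    ring
  have hconst := is_const_of_fderiv_eq_zero (fun p => (hu p).differentiableAt) hfder0
  have hform : ∀ p : ℝ × ℝ, q.val p = Complex.exp (μ * (p.2:ℂ)) * q.val ((0:ℝ),(0:ℝ)) := by
    intro p
    have h1 : Complex.exp (-μ * (p.2:ℂ)) * q.val p = q.val ((0:ℝ),(0:ℝ)) := by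
      have h2 := hconst p ((0:ℝ),(0:ℝ))
      simpa using h2
    have h3 : Complex.exp (μ * (p.2:ℂ)) * Complex.exp (-μ * (p.2:ℂ)) = 1 := by
      rw [← Complex.exp_add, show μ * (p.2:ℂ) + -μ * (p.2:ℂ) = 0 by ring, Complex.exp_zero]
    calc q.val p = (Complex.exp (μ * (p.2:ℂ)) * Complex.exp (-μ * (p.2:ℂ))) * q.val p := by
          rw [h3, one_mul]
      _ = Complex.exp (μ * (p.2:ℂ)) * (Complex.exp (-μ * (p.2:ℂ)) * q.val p) := by ring
      _ = _ := by rw [h1]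
  have hc0 : q.val ((0:ℝ),(0:ℝ)) ≠ 0 := by
    intro h0
    apply hq.2
    apply Subtype.ext
    funext p
    show q.val p = 0
    rw [hform p, h0, mul_zero]
  -- the pure exponential lies in V
  let f0 : ℝ × ℝ → ℂ := fun p => Complex.exp (μ * (p.2:ℂ))
  have hf0V : f0 ∈ V := by
    have heq : (q.val ((0:ℝ),(0:ℝ)))⁻¹ • q.val = f0 := by
      funext p
      show (q.val ((0:ℝ),(0:ℝ)))⁻¹ * q.val p = f0 p
      rw [hform p, mul_comm (Complex.exp _) _, ← mul_assoc, inv_mul_cancel₀ hc0, one_mul]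
    rw [← heq]
    exact V.smul_mem _ hqV
  have hf0sm : ContDiff ℝ (⊤:ℕ∞) f0 :=
    Complex.contDiff_exp.comp (contDiff_const.mul contDiffY)
  have hf0d : ∀ p : ℝ × ℝ, HasFDerivAt f0 (Complex.exp (μ * (p.2:ℂ)) • (μ • LY)) p :=
    fun p => ((hasFDerivAt_Y p).const_mul μ).cexp
  have hf0x : pdx f0 = 0 := by
    funext p
    show fderiv ℝ f0 p (1,0) = 0
    rw [(hf0d p).fderiv]
    simp
  have hf0y : ∀ p : ℝ × ℝ, pdy f0 p = μ * f0 p := by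
    intro p
    show fderiv ℝ f0 p (0,1) = μ * f0 p
    rw [(hf0d p).fderiv]
    simp [f0]
    ring
  -- Part 2: iterate D3 on f0
  let seq : ℕ → (ℝ × ℝ → ℂ) := fun n => Nat.rec f0 (fun _ g => D3 α g) n
  have hseq0 : seq 0 = f0 := rfl
  have hseqs : ∀ n, seq (n+1) = D3 α (seq n) := fun n => rfl
  have hprop : ∀ n, seq n ∈ V ∧ ContDiff ℝ (⊤:ℕ∞) (seq n) ∧
      D2 (seq n) = ((2*(n:ℂ)) - μ) • seq n ∧ seq n ((0:ℝ),(0:ℝ)) = α ^ n := by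
    intro n
    induction n with
    | zero =>
      refine ⟨hf0V, hf0sm, ?_, ?_⟩
      · funext p
        rw [hseq0]
        simp only [D2, Pi.smul_apply, smul_eq_mul]
        rw [congrFun hf0x p, hf0y p]
        simp only [Pi.zero_apply]
        push_cast
        ring
      · rw [hseq0]
        show Complex.exp (μ * ((0:ℝ):ℂ)) = α ^ 0
        simp
    | succ n ih =>
      obtain ⟨hV1, hsm1, heig1, hval1⟩ := ih
      refine ⟨by rw [hseqs]; exact hD3mem _ hV1, by rw [hseqs]; exact smooth_D3 hsm1, ?_, ?_⟩
      · funext p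
        rw [hseqs]
        rw [comm23 hsm1 p, heig1, D3_smul (diffble hsm1)]
        simp only [Pi.smul_apply, smul_eq_mul]
        push_cast
        ring
      · rw [hseqs]
        show D3 α (seq n) ((0:ℝ),(0:ℝ)) = α ^ (n+1)
        simp only [D3]
        rw [hval1]
        norm_num
        rw [pow_succ]
        ring
  -- conclusion
  let u : ℕ → ↥V := fun n => ⟨seq n, (hprop n).1⟩
  have hinj2 : Function.Injective (fun n : ℕ => (2*(n:ℂ)) - μ) := by
    intro a b hab
    simp only at hab
    have : (a:ℂ) = (b:ℂ) := by linear_combination (1/2 : ℂ) * hab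
    exact_mod_cast this
  obtain ⟨n, hn⟩ := FIN _ hinj2 u (fun n => (hprop n).2.2.1)
  have hzero : seq n ((0:ℝ),(0:ℝ)) = 0 := by
    have h5 := congrArg Subtype.val hn
    have h6 : seq n = (0 : ℝ × ℝ → ℂ) := h5
    rw [h6]
    rfl
  rw [(hprop n).2.2.2] at hzero
  exact pow_ne_zero n hα hzero
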